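/- If Λ = exp(L) where L = u ∧^g w ∈ so(g), and S := exp(σ(L)) where σ(L) = ¼(γ_u γ_w - γ_w γ_u), then S γ_v S^{-1} = γ_{Λ v} for every vector v ∈ V. -/

import Mathlib

open CliffordAlgebra

noncomputable section

variable {V : Type} [AddCommGroup V] [Module ℝ V]

/-- Clifford conjugation `†`: the linear extension of
`(e_{α₁}⋯e_{α_k})† = (-1)^k e_{α_k}⋯e_{α₁}`, i.e. reversal composed with
the grade involution. -/
def cliffConj (Q : QuadraticForm ℝ V) : CliffordAlgebra Q →ₗ[ℝ] CliffordAlgebra Q :=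
  reverse (R := ℝ) ∘ₗ involute.toLinearMap

/-- The scalar (`e_∅`) component `⟨ψ⟩_∅` of a Clifford algebra element, i.e. the
coefficient of `1` in the canonical basis expansion.  Since left multiplication by a
basis element `e_I` with `I ≠ ∅` is traceless, this equals the normalized trace of
left multiplication by `ψ`. -/
def scalarPart (Q : QuadraticForm ℝ V) (ψ : CliffordAlgebra Q) : ℝ :=
  LinearMap.trace ℝ (CliffordAlgebra Q) (LinearMap.mulLeft ℝ ψ) /
    Module.finrank ℝ (CliffordAlgebra Q)

/-- The extended metric `ĝ(ψ,φ) = -½⟨ψ†φ + φ†ψ⟩_∅`. -/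
def gHat (Q : QuadraticForm ℝ V) (ψ φ : CliffordAlgebra Q) : ℝ :=
  -(1/2) * scalarPart Q (cliffConj Q ψ * φ + cliffConj Q φ * ψ)

/-- `γ_v`: left Clifford multiplication by the vector `v`. -/
def gammaL (Q : QuadraticForm ℝ V) (v : V) : Module.End ℝ (CliffordAlgebra Q) :=
  LinearMap.mulLeft ℝ (ι Q v)

/-- The symmetric bilinear form `g` obtained from `Q` by polarization:
`g(u,v) = ½(Q(u+v) - Q u - Q v)`, so that `e_α e_β + e_β e_α = 2 g_{αβ}`. -/
def gForm (Q : QuadraticForm ℝ V) (u v : V) : ℝ := QuadraticMap.polar Q u v / 2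

/-- The spin representation on elementary elements:
`σ(u ∧^g v) := ¼(γ_u γ_v - γ_v γ_u)`. -/
def sigmaSpin (Q : QuadraticForm ℝ V) (u v : V) : Module.End ℝ (CliffordAlgebra Q) :=
  (1/4 : ℝ) • (gammaL Q u * gammaL Q v - gammaL Q v * gammaL Q u)

/-- The polarization bilinear form `g` of `Q`, with `g(u,v) = ½ polar Q u v`. -/
def gBilin (Q : QuadraticForm ℝ V) : LinearMap.BilinForm ℝ V :=
  (1/2 : ℝ) • QuadraticMap.polarBilin Q

/-- The elementary skew-adjoint endomorphism `u ∧^g v : w ↦ g(v,w) u - g(u,w) v`. -/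
def wedgeG (g : LinearMap.BilinForm ℝ V) (u v : V) : Module.End ℝ V :=
  (g v).smulRight u - (g u).smulRight v

/-- The exponential of an endomorphism of a finite-dimensional real vector space,
computed through the matrix exponential in an arbitrary basis (the result is
basis-independent). -/
def endExp {W : Type} [AddCommGroup W] [Module ℝ W] [FiniteDimensional ℝ W]
    (f : Module.End ℝ W) : Module.End ℝ W :=
  (LinearMap.toMatrix (Module.finBasis ℝ W) (Module.finBasis ℝ W)).symm
    (NormedSpace.exp (LinearMap.toMatrix (Module.finBasis ℝ W) (Module.finBasis ℝ W) f))


/-! ### Auxiliary lemmas for the proof -/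

open Matrix in
/-- Purely algebraic commutator computation: if `A,C` and `B,C` anticommute up to scalars
`α`, `β`, then `[¼(AB-BA), C] = (β/2)A - (α/2)B`. -/
lemma quarter_comm {R : Type*} [Ring R] [Algebra ℝ R] (A B C : R) (α β : ℝ)
    (hA : A * C + C * A = algebraMap ℝ R α) (hB : B * C + C * B = algebraMap ℝ R β) :
    ((1/4 : ℝ) • (A * B - B * A)) * C - C * ((1/4 : ℝ) • (A * B - B * A)) =
      (β / 2) • A - (α / 2) • B := by
  rw [Algebra.algebraMap_eq_smul_one] at hA hB
  have hCA : C * A = α • (1 : R) - A * C := eq_sub_of_add_eq' hA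
  have hCB : C * B = β • (1 : R) - B * C := eq_sub_of_add_eq' hB
  have e1 : C * (A * B) = α • B - β • A + A * (B * C) := by
    rw [← mul_assoc, hCA, sub_mul, smul_mul_assoc, one_mul, mul_assoc, hCB, mul_sub,
      mul_smul_comm, mul_one]
    abel
  have e2 : C * (B * A) = β • A - α • B + B * (A * C) := by
    rw [← mul_assoc, hCB, sub_mul, smul_mul_assoc, one_mul, mul_assoc, hCA, mul_sub,
      mul_smul_comm, mul_one]
    abel
  rw [smul_mul_assoc, mul_smul_comm, sub_mul, mul_sub, e1, e2, mul_assoc, mul_assoc]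
  match_scalars <;> ring

/-- The Clifford anticommutation relation at the level of left-multiplication operators. -/
lemma gamma_anticomm (Q : QuadraticForm ℝ V) (a b : V) :
    gammaL Q a * gammaL Q b + gammaL Q b * gammaL Q a
      = algebraMap ℝ (Module.End ℝ (CliffordAlgebra Q)) (QuadraticMap.polar Q a b) := by
  ext ψ
  simp only [LinearMap.add_apply, Module.End.mul_apply, gammaL, LinearMap.mulLeft_apply,
    Module.algebraMap_end_apply, ← mul_assoc, ← add_mul, ι_mul_ι_add_swap, ← Algebra.smul_def]

/-- The key infinitesimal identity: `[σ(u ∧ w), γ_v] = γ_{(u ∧ w) v}`. -/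
lemma comm_sigma_gamma (Q : QuadraticForm ℝ V) (u w v : V) :
    sigmaSpin Q u w * gammaL Q v - gammaL Q v * sigmaSpin Q u w
      = gammaL Q (wedgeG (gBilin Q) u w v) := by
  have key := quarter_comm (gammaL Q u) (gammaL Q w) (gammaL Q v)
      (QuadraticMap.polar Q u v) (QuadraticMap.polar Q w v)
      (gamma_anticomm Q u v) (gamma_anticomm Q w v)
  rw [sigmaSpin, key]
  have hv : wedgeG (gBilin Q) u w v
      = (QuadraticMap.polar Q w v / 2) • u - (QuadraticMap.polar Q u v / 2) • w := by
    simp [wedgeG, gBilin, QuadraticMap.polarBilin]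
    ring_nf
  rw [hv]
  ext ψ
  simp [gammaL, sub_mul, smul_mul_assoc]

open Matrix NormedSpace in
/-- If conjugation infinitesimally intertwines `M` with `LM` through a linear family
`Φ` of matrices, then the exponentials intertwine as well. -/
lemma key_conj {n N : ℕ}
    (M : Matrix (Fin N) (Fin N) ℝ) (LM : Matrix (Fin n) (Fin n) ℝ)
    (Φ : (Fin n → ℝ) →ₗ[ℝ] Matrix (Fin N) (Fin N) ℝ)
    (hcomm : ∀ y, M * Φ y - Φ y * M = Φ (LM *ᵥ y)) (x : Fin n → ℝ) :
    exp M * Φ x * exp (-M) = Φ (exp LM *ᵥ x) := by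
  letI : NormedRing (Matrix (Fin N) (Fin N) ℝ) := Matrix.linftyOpNormedRing
  letI : NormedAlgebra ℝ (Matrix (Fin N) (Fin N) ℝ) := Matrix.linftyOpNormedAlgebra
  letI : NormedRing (Matrix (Fin n) (Fin n) ℝ) := Matrix.linftyOpNormedRing
  letI : NormedAlgebra ℝ (Matrix (Fin n) (Fin n) ℝ) := Matrix.linftyOpNormedAlgebra
  have main : ∀ z : Fin n → ℝ, exp M * Φ (exp (-LM) *ᵥ z) * exp (-M) = Φ z := by
    intro z
    set Ψlin : Matrix (Fin n) (Fin n) ℝ →ₗ[ℝ] Matrix (Fin N) (Fin N) ℝ :=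
      Φ ∘ₗ { toFun := fun m => m *ᵥ z,
             map_add' := fun a b => Matrix.add_mulVec a b z,
             map_smul' := fun c a => Matrix.smul_mulVec c a z } with hΨlin
    set Ψ := LinearMap.toContinuousLinearMap Ψlin with hΨ
    set F : ℝ → Matrix (Fin N) (Fin N) ℝ :=
      fun t => exp (t • M) * Φ (exp (t • (-LM)) *ᵥ z) * exp (t • (-M)) with hF
    have hΨapp : ∀ m, Ψ m = Φ (m *ᵥ z) := fun m => rfl
    have hder : ∀ t : ℝ, HasDerivAt F 0 t := by
      intro t
      have h1 := hasDerivAt_exp_smul_const (𝕂 := ℝ) M t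
      have h2 := hasDerivAt_exp_smul_const (𝕂 := ℝ) (-LM) t
      have h3 := hasDerivAt_exp_smul_const (𝕂 := ℝ) (-M) t
      have hg : HasDerivAt (fun t : ℝ => Φ (exp (t • (-LM)) *ᵥ z))
          (Φ ((exp (t • (-LM)) * (-LM)) *ᵥ z)) t := by
        have := Ψ.hasFDerivAt.comp_hasDerivAt t h2
        exact this.congr_deriv (hΨapp _)
      have hD := (h1.mul hg).mul h3
      have hc2 : exp (t • (-LM)) * LM = LM * exp (t • (-LM)) :=
        (Commute.exp_left (((Commute.refl LM).neg_left).smul_left t)).eq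
      have hc3 : exp (t • (-M)) * M = M * exp (t • (-M)) :=
        (Commute.exp_left (((Commute.refl M).neg_left).smul_left t)).eq
      have hzero :
          (exp (t • M) * M * Φ (exp (t • (-LM)) *ᵥ z)
              + exp (t • M) * Φ ((exp (t • (-LM)) * (-LM)) *ᵥ z))
            * exp (t • (-M))
          + exp (t • M) * Φ (exp (t • (-LM)) *ᵥ z) * (exp (t • (-M)) * (-M)) = 0 := by
        set E1 := exp (t • M)
        set E2 := exp (t • (-LM))
        set E3 := exp (t • (-M))
        have hmv : (E2 * (-LM)) *ᵥ z = -(LM *ᵥ (E2 *ᵥ z)) := by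
          rw [mul_neg, Matrix.neg_mulVec, Matrix.mulVec_mulVec, hc2]
        have h := hcomm (E2 *ᵥ z)
        rw [hmv, map_neg, ← h, show E3 * -M = -(M * E3) by rw [mul_neg, hc3]]
        noncomm_ring
      rw [← hzero]
      exact hD
    have hdiff : Differentiable ℝ F := fun t => (hder t).differentiableAt
    have hfd : ∀ t : ℝ, fderiv ℝ F t = 0 := by
      intro t
      rw [(hder t).hasFDerivAt.fderiv]
      exact ContinuousLinearMap.ext fun s => by simp
    have h10 : F 1 = F 0 := is_const_of_fderiv_eq_zero hdiff hfd 1 0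
    simpa [hF, Matrix.one_mulVec] using h10
  have h1 : exp (-LM) *ᵥ (exp LM *ᵥ x) = x := by
    rw [Matrix.mulVec_mulVec, ← Matrix.exp_add_of_commute (-LM) LM ((Commute.refl LM).neg_left),
      neg_add_cancel, exp_zero, Matrix.one_mulVec]
  have := main (exp LM *ᵥ x)
  rwa [h1] at this


open Matrix in
/-- if `Λ = exp(L)` with `L = u ∧^g w ∈ so(g)` and `S = exp(σ(L))`,
then `S γ_v S⁻¹ = γ_{Λv}` for every vector `v`. -/
theorem exp_sigma_conjugates_gamma (Q : QuadraticForm ℝ V) [FiniteDimensional ℝ V]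
    [FiniteDimensional ℝ (CliffordAlgebra Q)] (u w : V)
    (Λ : Module.End ℝ V) (hΛ : Λ = endExp (wedgeG (gBilin Q) u w))
    (S : Module.End ℝ (CliffordAlgebra Q)) (hS : S = endExp (sigmaSpin Q u w)) (v : V) :
    S * gammaL Q v * Ring.inverse S = gammaL Q (Λ v) := by
  subst hΛ hS
  set c := Module.finBasis ℝ (CliffordAlgebra Q) with hc
  set b := Module.finBasis ℝ V with hb
  set σ := sigmaSpin Q u w with hσ
  set L := wedgeG (gBilin Q) u w with hL
  set M := LinearMap.toMatrix c c σ with hM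
  set LM := LinearMap.toMatrix b b L with hLM
  letI : NormedRing (Matrix (Fin (Module.finrank ℝ (CliffordAlgebra Q)))
      (Fin (Module.finrank ℝ (CliffordAlgebra Q))) ℝ) := Matrix.linftyOpNormedRing
  letI : NormedAlgebra ℝ (Matrix (Fin (Module.finrank ℝ (CliffordAlgebra Q)))
      (Fin (Module.finrank ℝ (CliffordAlgebra Q))) ℝ) := Matrix.linftyOpNormedAlgebra
  have gamma_add : ∀ a bb : V, gammaL Q (a + bb) = gammaL Q a + gammaL Q bb := by
    intro a bb; ext ψ; simp [gammaL, map_add, add_mul]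
  have gamma_smul : ∀ (r : ℝ) (a : V), gammaL Q (r • a) = r • gammaL Q a := by
    intro r a; ext ψ; simp [gammaL, _root_.map_smul, smul_mul_assoc]
  set gammaLin : V →ₗ[ℝ] Module.End ℝ (CliffordAlgebra Q) :=
    { toFun := fun x => gammaL Q x
      map_add' := gamma_add
      map_smul' := gamma_smul } with hgammaLin
  set Φ : (Fin (Module.finrank ℝ V) → ℝ) →ₗ[ℝ]
      Matrix (Fin (Module.finrank ℝ (CliffordAlgebra Q)))
        (Fin (Module.finrank ℝ (CliffordAlgebra Q))) ℝ :=
    (LinearMap.toMatrix c c).toLinearMap ∘ₗ gammaLin ∘ₗ b.equivFun.symm.toLinearMap with hΦdef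
  have hΦ : ∀ y, Φ y = LinearMap.toMatrix c c (gammaL Q (b.equivFun.symm y)) := fun _ => rfl
  have hrepr : ∀ x : V, b.equivFun.symm (⇑(b.repr x)) = x := by
    intro x
    rw [← Module.Basis.equivFun_apply]
    exact b.equivFun.symm_apply_apply x
  have hcomm : ∀ y, M * Φ y - Φ y * M = Φ (LM *ᵥ y) := by
    intro y
    set v' := b.equivFun.symm y with hv'
    have hy : (⇑(b.repr v') : Fin (Module.finrank ℝ V) → ℝ) = y := by
      rw [← Module.Basis.equivFun_apply, hv', b.equivFun.apply_symm_apply]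
    have h2 : LM *ᵥ y = ⇑(b.repr (L v')) := by
      rw [← hy, hLM]
      exact LinearMap.toMatrix_mulVec_repr b b L v'
    rw [hΦ, hΦ, h2, hM, ← LinearMap.toMatrix_mul, ← LinearMap.toMatrix_mul, ← map_sub,
      comm_sigma_gamma Q u w v', hrepr]
  have hexp1 : NormedSpace.exp M * NormedSpace.exp (-M) = 1 := by
    rw [← Matrix.exp_add_of_commute M (-M) ((Commute.refl M).neg_right), add_neg_cancel,
      NormedSpace.exp_zero]
  have hexp2 : NormedSpace.exp (-M) * NormedSpace.exp M = 1 := by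
    rw [← Matrix.exp_add_of_commute (-M) M ((Commute.refl M).neg_left), neg_add_cancel,
      NormedSpace.exp_zero]
  have hSdef : endExp σ = (LinearMap.toMatrix c c).symm (NormedSpace.exp M) := rfl
  set T := (LinearMap.toMatrix c c).symm (NormedSpace.exp (-M)) with hT
  have hone : LinearMap.toMatrix c c (1 : Module.End ℝ (CliffordAlgebra Q)) = 1 := by
    exact LinearMap.toMatrix_one c
  have hST : endExp σ * T = 1 := by
    apply (LinearMap.toMatrix c c).injective
    rw [LinearMap.toMatrix_mul, hSdef, hT, LinearEquiv.apply_symm_apply,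
      LinearEquiv.apply_symm_apply, hexp1, hone]
  have hTS : T * endExp σ = 1 := by
    apply (LinearMap.toMatrix c c).injective
    rw [LinearMap.toMatrix_mul, hSdef, hT, LinearEquiv.apply_symm_apply,
      LinearEquiv.apply_symm_apply, hexp2, hone]
  have hinv : Ring.inverse (endExp σ) = T := Ring.inverse_unit ⟨endExp σ, T, hST, hTS⟩
  rw [hinv]
  have hLv : endExp L v = b.equivFun.symm (NormedSpace.exp LM *ᵥ (⇑(b.repr v))) := by
    have h1 : LinearMap.toMatrix b b (endExp L) = NormedSpace.exp LM := by
      rw [hLM]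
      exact (LinearMap.toMatrix b b).apply_symm_apply _
    have h3 := LinearMap.toMatrix_mulVec_repr b b (endExp L) v
    rw [h1] at h3
    rw [h3, hrepr]
  apply (LinearMap.toMatrix c c).injective
  rw [LinearMap.toMatrix_mul, LinearMap.toMatrix_mul, hSdef, hT,
    LinearEquiv.apply_symm_apply, LinearEquiv.apply_symm_apply, hLv]
  have hgoal := key_conj M LM Φ hcomm (⇑(b.repr v))
  simp only [hΦ] at hgoal
  rw [hrepr] at hgoal
  exact hgoal
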